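/- Let F : 𝔽₂^{n₁} × 𝔽₂^{n₂} → 𝔽₂^{n₁+n₂} be a decomposable Boolean network, F(x,y) = (F₁(x), H(x,y)), and let c ∈ 𝔽₂^{n₁} be a steady state of F₁. Then the map C₂ ↦ {c} × C₂ = { (c,d) : d ∈ C₂ } is a bijection between the attractors of the downstream Boolean network F₂^c : y ↦ H(c,y) and the attractors C of F whose projection to the first block equals {c}; moreover this bijection preserves attractor length. -/

import Mathlib

/-- An attractor of a Boolean network `F : α → α` is a minimal nonempty subset `C`
with `F(C) = C`. -/
def IsAttractor {α : Type*} (F : α → α) (C : Set α) : Prop :=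
  C.Nonempty ∧ F '' C = C ∧ ∀ D ⊆ C, D.Nonempty → F '' D = D → D = C

/-- Let `F(x,y) = (F₁ x, H x y)` be a decomposable Boolean network
and let `c` be a steady state of `F₁`. Then `C₂ ↦ {c} × C₂` is a bijection between the
attractors of the downstream network `F₂^c = H c ·` and the attractors of `F` whose
projection to the first block equals `{c}`, and it preserves attractor length. -/
theorem stmt_5 (n₁ n₂ : ℕ)
    (F₁ : (Fin n₁ → ZMod 2) → (Fin n₁ → ZMod 2))
    (H : (Fin n₁ → ZMod 2) → (Fin n₂ → ZMod 2) → (Fin n₂ → ZMod 2))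
    (F : (Fin n₁ → ZMod 2) × (Fin n₂ → ZMod 2) → (Fin n₁ → ZMod 2) × (Fin n₂ → ZMod 2))
    (hF : ∀ x y, F (x, y) = (F₁ x, H x y))
    (c : Fin n₁ → ZMod 2) (hc : F₁ c = c) :
    -- the map is onto the attractors of `F` over `{c}`, and only produces such attractors
    (∀ C : Set ((Fin n₁ → ZMod 2) × (Fin n₂ → ZMod 2)),
      (IsAttractor F C ∧ Prod.fst '' C = {c}) ↔
        ∃ C₂ : Set (Fin n₂ → ZMod 2),
          IsAttractor (fun y => H c y) C₂ ∧ C = ({c} : Set (Fin n₁ → ZMod 2)) ×ˢ C₂) ∧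
    -- the map is injective
    (∀ C₂ C₂' : Set (Fin n₂ → ZMod 2),
      (({c} : Set (Fin n₁ → ZMod 2)) ×ˢ C₂ = ({c} : Set (Fin n₁ → ZMod 2)) ×ˢ C₂') →
        C₂ = C₂') ∧
    -- the map preserves attractor length
    (∀ C₂ : Set (Fin n₂ → ZMod 2),
      IsAttractor (fun y => H c y) C₂ →
        (({c} : Set (Fin n₁ → ZMod 2)) ×ˢ C₂).ncard = C₂.ncard) := by
  classical
  have mkinj : Function.Injective (Prod.mk c : (Fin n₂ → ZMod 2) → _) := by
    intro a b h
    exact congrArg Prod.snd h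
  have key : ∀ S : Set (Fin n₂ → ZMod 2),
      F '' (Prod.mk c '' S) = Prod.mk c '' ((fun y => H c y) '' S) := by
    intro S
    rw [Set.image_image, Set.image_image]
    apply Set.image_congr
    intro y _
    rw [hF, hc]
  have repr : ∀ D : Set ((Fin n₁ → ZMod 2) × (Fin n₂ → ZMod 2)),
      (∀ p ∈ D, p.1 = c) → D = Prod.mk c '' (Prod.snd '' D) := by
    intro D hD
    ext ⟨a, b⟩
    simp only [Set.image_image, Set.mem_image]
    constructor
    · intro h
      exact ⟨(a, b), h, Prod.ext (hD _ h).symm rfl⟩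
    · rintro ⟨⟨a', b'⟩, h, heq⟩
      have h1 := hD _ h
      simp only at h1
      obtain ⟨h2, h3⟩ := Prod.mk.injEq .. ▸ heq
      rw [← h2, ← h3, ← h1]
      exact h
  refine ⟨?_, ?_, ?_⟩
  · intro C
    constructor
    · rintro ⟨⟨hne, hinv, hmin⟩, hproj⟩
      have hfst : ∀ p ∈ C, p.1 = c := by
        intro p hp
        have : p.1 ∈ Prod.fst '' C := ⟨p, hp, rfl⟩
        rw [hproj] at this
        exact this
      set C₂ : Set (Fin n₂ → ZMod 2) := Prod.snd '' C with hC₂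
      have hCeq : C = Prod.mk c '' C₂ := repr C hfst
      refine ⟨C₂, ⟨?_, ?_, ?_⟩, by rw [Set.singleton_prod, ← hCeq]⟩
      · obtain ⟨p, hp⟩ := hne
        exact ⟨p.2, p, hp, rfl⟩
      · have : F '' (Prod.mk c '' C₂) = Prod.mk c '' C₂ := by rw [← hCeq]; exact hinv
        rw [key] at this
        exact (Set.image_eq_image mkinj).mp this
      · intro D₂ hsub hne₂ hinv₂
        have h1 : Prod.mk c '' D₂ ⊆ C := by
          rw [hCeq]; exact Set.image_mono hsub
        have h2 : (Prod.mk c '' D₂).Nonempty := hne₂.image _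
        have h3 : F '' (Prod.mk c '' D₂) = Prod.mk c '' D₂ := by
          rw [key, hinv₂]
        have := hmin _ h1 h2 h3
        rw [hCeq] at this
        exact (Set.image_eq_image mkinj).mp this
    · rintro ⟨C₂, ⟨hne, hinv, hmin⟩, rfl⟩
      rw [Set.singleton_prod]
      constructor
      · refine ⟨hne.image _, ?_, ?_⟩
        · rw [key, hinv]
        · intro D hsub hneD hinvD
          have hfst : ∀ p ∈ D, p.1 = c := by
            intro p hp
            obtain ⟨y, _, hy⟩ := hsub hp
            rw [← hy]
          set D₂ : Set (Fin n₂ → ZMod 2) := Prod.snd '' D with hD₂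
          have hDeq : D = Prod.mk c '' D₂ := repr D hfst
          have hsub₂ : D₂ ⊆ C₂ := by
            have : Prod.mk c '' D₂ ⊆ Prod.mk c '' C₂ := by rw [← hDeq]; exact hsub
            exact (Set.image_subset_image_iff mkinj).mp this
          have hne₂ : D₂.Nonempty := by
            obtain ⟨p, hp⟩ := hneD
            exact ⟨p.2, p, hp, rfl⟩
          have hinv₂ : (fun y => H c y) '' D₂ = D₂ := by
            have : F '' (Prod.mk c '' D₂) = Prod.mk c '' D₂ := by rw [← hDeq]; exact hinvD
            rw [key] at this
            exact (Set.image_eq_image mkinj).mp this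
          rw [hDeq, hmin _ hsub₂ hne₂ hinv₂]
      · rw [Set.image_image]
        exact hne.image_const c
  · intro C₂ C₂' h
    rw [Set.singleton_prod, Set.singleton_prod] at h
    exact (Set.image_eq_image mkinj).mp h
  · intro C₂ _
    rw [Set.singleton_prod, Set.ncard_image_of_injective _ mkinj]
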